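/- Let u, v : ℝⁿ → (-∞,∞] be convex, proper, lower semicontinuous. If the pointwise minimum u ∧ v is convex, then so is u* ∧ v*. Moreover (u ∧ v)* = u* ∨ v* and, when u ∧ v is convex, (u ∨ v)* = u* ∧ v*. -/

import Mathlib

open MeasureTheory Filter

noncomputable def conj {n : ℕ} (u : EuclideanSpace ℝ (Fin n) → EReal)
    (x : EuclideanSpace ℝ (Fin n)) : EReal :=
  ⨆ y, ((inner ℝ x y : ℝ) : EReal) - u y

/-- Convexity for extended-real-valued functions on `ℝⁿ`. -/
def ErealConvexOn {n : ℕ} (u : EuclideanSpace ℝ (Fin n) → EReal) : Prop :=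
  ∀ x y : EuclideanSpace ℝ (Fin n), ∀ a b : ℝ, 0 ≤ a → 0 ≤ b → a + b = 1 →
    u (a • x + b • y) ≤ (a : EReal) * u x + (b : EReal) * u y

/-- Proper: never `-∞` and not identically `+∞`. -/
def EProper {n : ℕ} (u : EuclideanSpace ℝ (Fin n) → EReal) : Prop :=
  (∀ x, u x ≠ ⊥) ∧ ∃ x, u x ≠ ⊤

/-- Coercive: `u x → ∞` as `‖x‖ → ∞`. -/
def ECoercive {n : ℕ} (u : EuclideanSpace ℝ (Fin n) → EReal) : Prop :=
  ∀ M : ℝ, ∃ R : ℝ, ∀ x, R ≤ ‖x‖ → (M : EReal) ≤ u x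

/-- Super-coercive: `u x / ‖x‖ → ∞` as `‖x‖ → ∞`. -/
def ESuperCoercive {n : ℕ} (u : EuclideanSpace ℝ (Fin n) → EReal) : Prop :=
  ∀ M : ℝ, ∃ R : ℝ, ∀ x, R ≤ ‖x‖ → ((M * ‖x‖ : ℝ) : EReal) ≤ u x

/-- If `u ∧ v` is convex then so is `u* ∧ v*`; moreover
`(u ∧ v)* = u* ∨ v*` and `(u ∨ v)* = u* ∧ v*`. -/

lemma combo_lt {a b m1 m2 L1 L2 : ℝ} (ha : 0 ≤ a) (hb : 0 ≤ b) (hab : a + b = 1)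
    (h1 : m1 < L1) (h2 : m2 < L2) : a * m1 + b * m2 < a * L1 + b * L2 := by
  rcases eq_or_lt_of_le ha with h | h
  · have hb1 : b = 1 := by linarith
    simp [← h, hb1, h2]
  · have hh1 : a * m1 < a * L1 := mul_lt_mul_of_pos_left h1 h
    have hh2 : b * m2 ≤ b * L2 := mul_le_mul_of_nonneg_left h2.le hb
    linarith

lemma ereal_lt_sub {r c : ℝ} {a : EReal} (h : (c : EReal) < (r : EReal) - a) :
    a < ((r - c : ℝ) : EReal) := by
  induction a using EReal.rec with
  | bot => exact EReal.bot_lt_coe _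
  | top => simp at h
  | coe m =>
    rw [← EReal.coe_sub] at h
    have h' : c < r - m := by exact_mod_cast h
    exact_mod_cast (by linarith : m < r - c)

lemma ereal_sub_lt {r c : ℝ} {a : EReal} (h : (r : EReal) - a < (c : EReal)) :
    ((r - c : ℝ) : EReal) ≤ a := by
  induction a using EReal.rec with
  | bot => simp at h
  | top => exact le_top
  | coe m =>
    rw [← EReal.coe_sub] at h
    have h' : r - m < c := by exact_mod_cast h
    exact_mod_cast (by linarith : r - c ≤ m)

lemma conj_convexOn {n : ℕ} (w : EuclideanSpace ℝ (Fin n) → EReal) :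
    ErealConvexOn (conj w) := by
  intro x y a b ha hb hab
  simp only [conj]
  apply iSup_le
  intro z
  have hin : (inner ℝ (a • x + b • y) z : ℝ) = a * (inner ℝ x z : ℝ) + b * (inner ℝ y z : ℝ) := by
    rw [inner_add_left, real_inner_smul_left, real_inner_smul_left]
  rw [hin]
  have h1 : ((a * (inner ℝ x z : ℝ) + b * (inner ℝ y z : ℝ) : ℝ) : EReal) - w z
      ≤ (a : EReal) * (((inner ℝ x z : ℝ) : EReal) - w z)
        + (b : EReal) * (((inner ℝ y z : ℝ) : EReal) - w z) := by
    set t := w z with hwz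
    clear_value t
    induction t using EReal.rec with
    | bot =>
      rw [EReal.coe_sub_bot, EReal.coe_sub_bot, EReal.coe_sub_bot]
      rcases eq_or_lt_of_le ha with h | h
      · have hb1 : b = 1 := by linarith
        simp [← h, hb1]
      · have hbt : (b : EReal) * ⊤ ≠ ⊥ := by
          rcases eq_or_lt_of_le hb with h' | h'
          · rw [← h']
            simp
          · rw [EReal.mul_top_of_pos (by exact_mod_cast h')]
            simp
        rw [EReal.mul_top_of_pos (by exact_mod_cast h), EReal.top_add_of_ne_bot hbt]
    | top => simp
    | coe m =>
      rw [← EReal.coe_sub, ← EReal.coe_sub, ← EReal.coe_sub, ← EReal.coe_mul, ← EReal.coe_mul,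
        ← EReal.coe_add, EReal.coe_le_coe_iff]
      have e : a * ((inner ℝ x z : ℝ) - m) + b * ((inner ℝ y z : ℝ) - m)
          = a * (inner ℝ x z : ℝ) + b * (inner ℝ y z : ℝ) - (a + b) * m := by ring
      rw [e, hab]
      linarith
  refine h1.trans (add_le_add ?_ ?_)
  · exact mul_le_mul_of_nonneg_left (le_iSup (fun y' => ((inner ℝ x y' : ℝ) : EReal) - w y') z)
      (by exact_mod_cast ha)
  · exact mul_le_mul_of_nonneg_left (le_iSup (fun y' => ((inner ℝ y y' : ℝ) : EReal) - w y') z)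
      (by exact_mod_cast hb)

lemma conj_min_eq {n : ℕ} (u v : EuclideanSpace ℝ (Fin n) → EReal) :
    conj (fun x => min (u x) (v x)) = fun x => max (conj u x) (conj v x) := by
  funext x
  simp only [conj]
  rw [← iSup_sup_eq]
  apply iSup_congr
  intro y
  rcases min_cases (u y) (v y) with ⟨h1, h2⟩ | ⟨h1, h2⟩
  · rw [h1, max_eq_left (EReal.sub_le_sub le_rfl h2)]
  · rw [h1, max_eq_right (EReal.sub_le_sub le_rfl h2.le)]

noncomputable def pt {n : ℕ} (y1 y2 : EuclideanSpace ℝ (Fin n)) (t : ℝ) :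
    EuclideanSpace ℝ (Fin n) := (1 - t) • y1 + t • y2

lemma min_real {a b : EReal} (ha : a ≠ ⊥) (hb : b ≠ ⊥) {L : ℝ} (h : min a b < (L : EReal)) :
    ∃ m : ℝ, min a b = (m : EReal) ∧ m < L := by
  have hnb : min a b ≠ ⊥ := by
    rcases min_cases a b with ⟨h1, _⟩ | ⟨h1, _⟩ <;> rw [h1] <;> assumption
  have hnt : min a b ≠ ⊤ := (h.trans (EReal.coe_lt_top L)).ne
  refine ⟨(min a b).toReal, (EReal.coe_toReal hnt hnb).symm, ?_⟩
  rw [← EReal.coe_toReal hnt hnb] at h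
  exact_mod_cast h

lemma factA {n : ℕ} (u v : EuclideanSpace ℝ (Fin n) → EReal)
    (hup : ∀ y, u y ≠ ⊥) (hvp : ∀ y, v y ≠ ⊥)
    (hmin : ErealConvexOn (fun x => min (u x) (v x)))
    (ℓ : EuclideanSpace ℝ (Fin n) → ℝ)
    (hℓ : ∀ (p q : EuclideanSpace ℝ (Fin n)) (a b : ℝ), 0 ≤ a → 0 ≤ b → a + b = 1 →
      ℓ (a • p + b • q) = a * ℓ p + b * ℓ q)
    (y1 y2 : EuclideanSpace ℝ (Fin n))
    (h1 : u y1 < (ℓ y1 : EReal)) (h2 : v y2 < (ℓ y2 : EReal))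
    (t : ℝ) (ht0 : 0 ≤ t) (ht1 : t ≤ 1) :
    min (u (pt y1 y2 t)) (v (pt y1 y2 t)) < ((ℓ (pt y1 y2 t) : ℝ) : EReal) := by
  obtain ⟨m1, hm1, hm1lt⟩ := min_real (hup y1) (hvp y1) ((min_le_left _ _).trans_lt h1)
  obtain ⟨m2, hm2, hm2lt⟩ := min_real (hup y2) (hvp y2) ((min_le_right _ _).trans_lt h2)
  have hc := hmin y1 y2 (1 - t) t (by linarith) ht0 (by ring)
  simp only at hc
  rw [hm1, hm2] at hc
  show min (u ((1 - t) • y1 + t • y2)) (v ((1 - t) • y1 + t • y2)) < _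
  refine lt_of_le_of_lt hc ?_
  show _ < ((ℓ ((1 - t) • y1 + t • y2) : ℝ) : EReal)
  rw [← EReal.coe_mul, ← EReal.coe_mul, ← EReal.coe_add,
    hℓ y1 y2 (1 - t) t (by linarith) ht0 (by ring), EReal.coe_lt_coe_iff]
  exact combo_lt (by linarith) ht0 (by ring) hm1lt hm2lt

lemma key_approach {n : ℕ} (u v : EuclideanSpace ℝ (Fin n) → EReal)
    (hup : ∀ y, u y ≠ ⊥) (hvp : ∀ y, v y ≠ ⊥)
    (hvl : LowerSemicontinuous v)
    (hmin : ErealConvexOn (fun x => min (u x) (v x)))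
    (ℓ : EuclideanSpace ℝ (Fin n) → ℝ)
    (hℓ : ∀ (p q : EuclideanSpace ℝ (Fin n)) (a b : ℝ), 0 ≤ a → 0 ≤ b → a + b = 1 →
      ℓ (a • p + b • q) = a * ℓ p + b * ℓ q)
    (hge : ∀ y, (ℓ y : EReal) ≤ max (u y) (v y))
    (y1 y2 : EuclideanSpace ℝ (Fin n))
    (h1 : u y1 < (ℓ y1 : EReal)) (h2 : v y2 < (ℓ y2 : EReal))
    (s : ℝ) (hs0 : 0 ≤ s) (hs1 : s < 1)
    (happ : ∀ ε > 0, ∃ t, s < t ∧ t ≤ 1 ∧ t < s + ε ∧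
      v (pt y1 y2 t) < (ℓ (pt y1 y2 t) : EReal)) :
    v (pt y1 y2 s) < (ℓ (pt y1 y2 s) : EReal) := by
  by_contra hcon
  push_neg at hcon
  have hAs := factA u v hup hvp hmin ℓ hℓ y1 y2 h1 h2 s hs0 hs1.le
  obtain ⟨Gs, hGs, hGslt⟩ := min_real (hup _) (hvp _) hAs
  have hA1 := factA u v hup hvp hmin ℓ hℓ y1 y2 h1 h2 1 zero_le_one le_rfl
  obtain ⟨G1, hG1, _⟩ := min_real (hup _) (hvp _) hA1
  set r : ℝ := (Gs + ℓ (pt y1 y2 s)) / 2 with hr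
  have hrGs : Gs < r := by rw [hr]; linarith
  have hrℓ : r < ℓ (pt y1 y2 s) := by rw [hr]; linarith
  have hrv : (r : EReal) < v (pt y1 y2 s) :=
    lt_of_lt_of_le (by exact_mod_cast hrℓ) hcon
  have hev := hvl (pt y1 y2 s) (r : EReal) hrv
  have hcontt : Filter.Tendsto (pt y1 y2) (nhds s) (nhds (pt y1 y2 s)) := by
    apply Continuous.tendsto
    unfold pt
    exact ((continuous_const.sub continuous_id).smul continuous_const).add
      (continuous_id.smul continuous_const)
  have hev2 : ∀ᶠ t in nhds s, (r : EReal) < v (pt y1 y2 t) := hcontt.eventually hev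
  obtain ⟨δ, hδ0, hδ⟩ := Metric.eventually_nhds_iff.1 hev2
  set β : ℝ := (r - Gs) / (1 + |G1 - Gs|) with hβ
  have hβ0 : 0 < β := div_pos (by linarith) (by positivity)
  obtain ⟨t, hts, ht1, htε, htv⟩ := happ (min δ ((1 - s) * β))
    (lt_min hδ0 (mul_pos (by linarith) hβ0))
  set b : ℝ := (t - s) / (1 - s) with hb
  have h1s : (0 : ℝ) < 1 - s := by linarith
  have hb0 : 0 ≤ b := div_nonneg (by linarith) h1s.le
  have hbβ : b < β := by
    rw [hb, div_lt_iff₀ h1s]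
    have h6 : t - s < (1 - s) * β :=
      lt_of_lt_of_le (by linarith [htε]) (min_le_right δ ((1 - s) * β))
    linarith [h6]
  set a : ℝ := 1 - b with ha
  have hb1 : b ≤ 1 := by rw [hb, div_le_one h1s]; linarith
  have ha0 : 0 ≤ a := by rw [ha]; linarith
  have hpt : pt y1 y2 t = a • (pt y1 y2 s) + b • y2 := by
    unfold pt
    rw [ha, hb]
    match_scalars <;> field_simp <;> ring
  have hc := hmin (pt y1 y2 s) y2 a b ha0 hb0 (by rw [ha]; ring)
  simp only at hc
  rw [← hpt, hGs] at hc
  have hpt1 : pt y1 y2 1 = y2 := by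
    unfold pt; norm_num
  have hG1' : min (u y2) (v y2) = (G1 : EReal) := by rw [← hpt1]; exact hG1
  rw [hG1'] at hc
  have huget : (ℓ (pt y1 y2 t) : EReal) ≤ u (pt y1 y2 t) := by
    rcases max_cases (u (pt y1 y2 t)) (v (pt y1 y2 t)) with ⟨hm, _⟩ | ⟨hm, _⟩
    · have := hge (pt y1 y2 t); rwa [hm] at this
    · exact absurd (lt_of_le_of_lt (hm ▸ hge (pt y1 y2 t)) htv) (lt_irrefl _)
  have hminv : min (u (pt y1 y2 t)) (v (pt y1 y2 t)) = v (pt y1 y2 t) :=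
    min_eq_right (le_of_lt (lt_of_lt_of_le htv huget))
  rw [hminv] at hc
  have hδt : dist t s < δ := by
    rw [Real.dist_eq, abs_of_pos (by linarith)]
    exact lt_of_lt_of_le (by linarith [htε]) (min_le_left δ ((1 - s) * β))
  have hrt := hδ hδt
  have hfin : v (pt y1 y2 t) ≤ ((a * Gs + b * G1 : ℝ) : EReal) := by
    rw [EReal.coe_add, EReal.coe_mul, EReal.coe_mul]; exact hc
  have hlt : a * Gs + b * G1 < r := by
    have hh1 := le_abs_self (G1 - Gs)
    have hh2 := abs_nonneg (G1 - Gs)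
    have h3 : b * (G1 - Gs) ≤ b * |G1 - Gs| := mul_le_mul_of_nonneg_left hh1 hb0
    have h4 : b * |G1 - Gs| ≤ β * |G1 - Gs| := mul_le_mul_of_nonneg_right hbβ.le hh2
    have h6 : β * |G1 - Gs| < β * (1 + |G1 - Gs|) := by nlinarith [hβ0]
    have h5 : β * (1 + |G1 - Gs|) = r - Gs := by
      rw [hβ]; field_simp
    have e : a * Gs + b * G1 = Gs + b * (G1 - Gs) := by rw [ha]; ring
    linarith [e, h3, h4, h6, h5]
  have hfinal : (r : EReal) < (r : EReal) :=
    lt_of_lt_of_le hrt (hfin.trans (le_of_lt (by exact_mod_cast hlt)))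
  exact lt_irrefl _ hfinal

lemma key {n : ℕ} (u v : EuclideanSpace ℝ (Fin n) → EReal)
    (hup : ∀ y, u y ≠ ⊥) (hvp : ∀ y, v y ≠ ⊥)
    (hul : LowerSemicontinuous u) (hvl : LowerSemicontinuous v)
    (hmin : ErealConvexOn (fun x => min (u x) (v x)))
    (ℓ : EuclideanSpace ℝ (Fin n) → ℝ)
    (hℓ : ∀ (p q : EuclideanSpace ℝ (Fin n)) (a b : ℝ), 0 ≤ a → 0 ≤ b → a + b = 1 →
      ℓ (a • p + b • q) = a * ℓ p + b * ℓ q)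
    (hge : ∀ y, (ℓ y : EReal) ≤ max (u y) (v y))
    (y1 y2 : EuclideanSpace ℝ (Fin n))
    (h1 : u y1 < (ℓ y1 : EReal)) (h2 : v y2 < (ℓ y2 : EReal)) : False := by
  have hpt1 : pt y1 y2 1 = y2 := by unfold pt; norm_num
  have hpt0 : pt y1 y2 0 = y1 := by unfold pt; norm_num
  set S : Set ℝ := {t | 0 ≤ t ∧ t ≤ 1 ∧ v (pt y1 y2 t) < (ℓ (pt y1 y2 t) : EReal)} with hS
  have h1S : (1 : ℝ) ∈ S := ⟨zero_le_one, le_rfl, by rw [hpt1]; exact h2⟩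
  have hne : S.Nonempty := ⟨1, h1S⟩
  have hbdd : BddBelow S := ⟨0, fun t ht => ht.1⟩
  set s := sInf S with hs
  have hs0 : 0 ≤ s := le_csInf hne fun t ht => ht.1
  have hs1 : s ≤ 1 := csInf_le hbdd h1S
  have honly : ∀ t, 0 ≤ t → t ≤ 1 → ¬ v (pt y1 y2 t) < (ℓ (pt y1 y2 t) : EReal) →
      u (pt y1 y2 t) < (ℓ (pt y1 y2 t) : EReal) := by
    intro t ht0 ht1 hnv
    have hA := factA u v hup hvp hmin ℓ hℓ y1 y2 h1 h2 t ht0 ht1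
    rcases min_cases (u (pt y1 y2 t)) (v (pt y1 y2 t)) with ⟨hm, _⟩ | ⟨hm, _⟩
    · rwa [hm] at hA
    · rw [hm] at hA; exact absurd hA hnv
  have hsV : v (pt y1 y2 s) < (ℓ (pt y1 y2 s) : EReal) := by
    by_cases hsS : s ∈ S
    · exact hsS.2.2
    · have hslt : s < 1 := lt_of_le_of_ne hs1 fun h => hsS (h ▸ h1S)
      apply key_approach u v hup hvp hvl hmin ℓ hℓ hge y1 y2 h1 h2 s hs0 hslt
      intro ε hε
      obtain ⟨t, htS, htlt⟩ := Real.lt_sInf_add_pos hne hε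
      have hst : s < t := lt_of_le_of_ne (csInf_le hbdd htS) fun h => hsS (h ▸ htS)
      exact ⟨t, hst, htS.2.1, htlt, htS.2.2⟩
  have hsgeu : (ℓ (pt y1 y2 s) : EReal) ≤ u (pt y1 y2 s) := by
    rcases max_cases (u (pt y1 y2 s)) (v (pt y1 y2 s)) with ⟨hm, _⟩ | ⟨hm, _⟩
    · have := hge (pt y1 y2 s); rwa [hm] at this
    · exact absurd (lt_of_le_of_lt (hm ▸ hge (pt y1 y2 s)) hsV) (lt_irrefl _)
  rcases eq_or_lt_of_le hs0 with h0 | h0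
  · rw [← h0, hpt0] at hsgeu
    exact absurd h1 (not_lt.2 hsgeu)
  · have hswap : ∀ t : ℝ, pt y2 y1 t = pt y1 y2 (1 - t) := by
      intro t
      unfold pt
      rw [show (1 : ℝ) - (1 - t) = t from by ring, add_comm]
    have hmin' : ErealConvexOn (fun x => min (v x) (u x)) := by
      simpa [min_comm] using hmin
    have hge' : ∀ y, (ℓ y : EReal) ≤ max (v y) (u y) := fun y => by
      rw [max_comm]; exact hge y
    have happ' : ∀ ε > 0, ∃ t', 1 - s < t' ∧ t' ≤ 1 ∧ t' < 1 - s + ε ∧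
        u (pt y2 y1 t') < (ℓ (pt y2 y1 t') : EReal) := by
      intro ε hε
      set τ : ℝ := s - min ε s / 2 with hτ
      have hmin_pos : 0 < min ε s := lt_min hε h0
      have hms : min ε s ≤ s := min_le_right ε s
      have hτ0 : 0 ≤ τ := by rw [hτ]; linarith
      have hτs : τ < s := by rw [hτ]; linarith
      have hτ1 : τ ≤ 1 := by linarith
      refine ⟨1 - τ, by linarith, by linarith, by
        rw [hτ]; linarith [min_le_left ε s], ?_⟩
      rw [hswap, show (1 : ℝ) - (1 - τ) = τ from by ring]
      have hτnS : τ ∉ S := fun hmem => absurd (csInf_le hbdd hmem) (not_le.2 hτs)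
      exact honly τ hτ0 hτ1 fun hv => hτnS ⟨hτ0, hτ1, hv⟩
    have hfin := key_approach v u hvp hup hul hmin' ℓ hℓ hge' y2 y1 h2 h1 (1 - s)
      (by linarith) (by linarith) happ'
    rw [hswap, show (1 : ℝ) - (1 - s) = s from by ring] at hfin
    exact absurd hfin (not_lt.2 hsgeu)

lemma conj_max_eq {n : ℕ} (u v : EuclideanSpace ℝ (Fin n) → EReal)
    (hup : ∀ y, u y ≠ ⊥) (hvp : ∀ y, v y ≠ ⊥)
    (hul : LowerSemicontinuous u) (hvl : LowerSemicontinuous v)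
    (hmin : ErealConvexOn (fun x => min (u x) (v x))) :
    conj (fun x => max (u x) (v x)) = fun x => min (conj u x) (conj v x) := by
  funext x
  refine le_antisymm (le_min ?_ ?_) ?_
  · exact iSup_mono fun y => EReal.sub_le_sub le_rfl (le_max_left _ _)
  · exact iSup_mono fun y => EReal.sub_le_sub le_rfl (le_max_right _ _)
  · by_contra hcon
    push_neg at hcon
    obtain ⟨c, hc1, hc2⟩ := EReal.exists_between_coe_real hcon
    have hcu : (c : EReal) < conj u x := hc2.trans_le (min_le_left _ _)
    have hcv : (c : EReal) < conj v x := hc2.trans_le (min_le_right _ _)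
    rw [conj, lt_iSup_iff] at hcu hcv
    obtain ⟨y1, hy1⟩ := hcu
    obtain ⟨y2, hy2⟩ := hcv
    have h1 : u y1 < (((inner ℝ x y1 : ℝ) - c : ℝ) : EReal) := ereal_lt_sub hy1
    have h2 : v y2 < (((inner ℝ x y2 : ℝ) - c : ℝ) : EReal) := ereal_lt_sub hy2
    have hge : ∀ y, ((((inner ℝ x y : ℝ) - c : ℝ)) : EReal) ≤ max (u y) (v y) := by
      intro y
      have hterm : ((inner ℝ x y : ℝ) : EReal) - max (u y) (v y) < (c : EReal) :=
        lt_of_le_of_lt (le_iSup (fun y' => ((inner ℝ x y' : ℝ) : EReal) - max (u y') (v y')) y) hc1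
      exact ereal_sub_lt hterm
    have hℓ : ∀ (p q : EuclideanSpace ℝ (Fin n)) (a b : ℝ), 0 ≤ a → 0 ≤ b → a + b = 1 →
        (inner ℝ x (a • p + b • q) : ℝ) - c = a * ((inner ℝ x p : ℝ) - c) + b * ((inner ℝ x q : ℝ) - c) := by
      intro p q a b ha hb hab
      rw [inner_add_right, real_inner_smul_right, real_inner_smul_right]
      have : a * ((inner ℝ x p : ℝ) - c) + b * ((inner ℝ x q : ℝ) - c)
          = a * (inner ℝ x p : ℝ) + b * (inner ℝ x q : ℝ) - (a + b) * c := by ring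
      rw [this, hab]
      ring
    exact key u v hup hvp hul hvl hmin (fun y => (inner ℝ x y : ℝ) - c) hℓ hge y1 y2 h1 h2

theorem stmt4 (n : ℕ) (u v : EuclideanSpace ℝ (Fin n) → EReal)
    (huc : ErealConvexOn u) (hup : EProper u) (hul : LowerSemicontinuous u)
    (hvc : ErealConvexOn v) (hvp : EProper v) (hvl : LowerSemicontinuous v)
    (hmin : ErealConvexOn (fun x => min (u x) (v x))) :
    ErealConvexOn (fun x => min (conj u x) (conj v x)) ∧
    conj (fun x => min (u x) (v x)) = (fun x => max (conj u x) (conj v x)) ∧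
    conj (fun x => max (u x) (v x)) = (fun x => min (conj u x) (conj v x)) := by
  have hmax := conj_max_eq u v hup.1 hvp.1 hul hvl hmin
  refine ⟨?_, conj_min_eq u v, hmax⟩
  rw [← hmax]
  exact conj_convexOn _
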